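/- For every pair of incompatible column types β₁ and β₂ (i.e., β₁ and β₂ are incomparable under column subtyping), there exists a base type interpolant: a column type β such that (1) β₁ ≤ β, (2) β is not compatible with β₂, and (3) every column type β' with β ≤ β' and β' ≠ β is compatible with β₂. -/

import Mathlib

/-- Column types in the refinement type system. -/
inductive ColTy where
  | top | quantitative | qualitative | discrete | continuous
  | nominal | ordinal | temporal
deriving DecidableEq

/-- The subtyping axioms on column types. -/
inductive ColSubAx : ColTy → ColTy → Prop where
  | quant_top : ColSubAx .quantitative .top
  | qual_top  : ColSubAx .qualitative .top
  | disc_quant : ColSubAx .discrete .quantitative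
  | cont_quant : ColSubAx .continuous .quantitative
  | nom_qual  : ColSubAx .nominal .qualitative
  | ord_qual  : ColSubAx .ordinal .qualitative
  | temp_qual : ColSubAx .temporal .qualitative

/-- Column subtyping: the reflexive-transitive closure of the axioms. -/
def ColSub : ColTy → ColTy → Prop := Relation.ReflTransGen ColSubAx

/-- Two column types are compatible iff one is a subtype of the other. -/
def ColCompat (β₁ β₂ : ColTy) : Prop := ColSub β₁ β₂ ∨ ColSub β₂ β₁

instance : Fintype ColTy := ⟨{.top, .quantitative, .qualitative, .discrete, .continuous, .nominal, .ordinal, .temporal}, fun x => by cases x <;> simp⟩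

open ColTy in
def colLe : ColTy → ColTy → Bool
  | a, b =>
    a = b ||
    b = top && a ≠ b ||
    (b = quantitative && (a = discrete || a = continuous)) ||
    (b = qualitative && (a = nominal || a = ordinal || a = temporal))

lemma colLe_of_ax {a b : ColTy} (h : ColSubAx a b) : colLe a b = true := by
  cases h <;> decide

lemma colLe_trans : ∀ {a b c : ColTy}, colLe a b = true → colLe b c = true → colLe a c = true := by
  decide

lemma colSub_of_colLe : ∀ {a b : ColTy}, colLe a b = true → ColSub a b := by
  have step : ∀ {a b : ColTy}, ColSubAx a b → ColSub a b :=
    fun h => Relation.ReflTransGen.single h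
  intro a b
  cases a <;> cases b <;> intro h <;> first
    | exact Relation.ReflTransGen.refl
    | exact step (by constructor)
    | exact Relation.ReflTransGen.trans (step (by constructor)) (step (by constructor))
    | simp [colLe] at h

lemma colSub_iff {a b : ColTy} : ColSub a b ↔ colLe a b = true := by
  constructor
  · intro h
    induction h with
    | refl => cases a <;> decide
    | tail _ hax ih => exact colLe_trans ih (colLe_of_ax hax)
  · exact colSub_of_colLe

instance : ∀ a b : ColTy, Decidable (ColSub a b) := fun a b =>
  decidable_of_iff _ colSub_iff.symm

instance : ∀ a b : ColTy, Decidable (ColCompat a b) := fun a b =>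
  inferInstanceAs (Decidable (_ ∨ _))

/-- Every pair of incompatible column types has a base type interpolant. -/
theorem exists_colTy_interpolant (β₁ β₂ : ColTy) (h : ¬ ColCompat β₁ β₂) :
    ∃ β : ColTy,
      ColSub β₁ β ∧
      ¬ ColCompat β β₂ ∧
      (∀ β' : ColTy, ColSub β β' → β' ≠ β → ColCompat β' β₂) := by
  revert h
  revert β₁ β₂
  decide
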